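/- For each Lyndon word l over the ordered alphabet Y (with y_1 > y_2 > ...), the polynomial Π_l is upper triangular and homogeneous in weight: Π_l = l + Σ_{v > l, (v) = (l)} c_v v, where (w) is the weight of w. -/

import Mathlib

open scoped BigOperators

/-- Words over the alphabet `Y = {y_s : s ≥ 1}`: a word is a list of positive integers. -/
abbrev Word : Type := List ℕ+

/-- The weight of a word `y_{i_1} ⋯ y_{i_r}` is `i_1 + ⋯ + i_r`. -/
def weight (w : Word) : ℕ := (w.map (fun s => (s : ℕ))).sum

/-- Noncommutative polynomials over `R` on the alphabet `Y`. -/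
abbrev NCPoly (R : Type) [CommRing R] : Type := Word →₀ R

variable {R : Type} [CommRing R]

/-- The `q`-stuffle product of two words, as a polynomial. -/
noncomputable def stuf (q : R) : Word → Word → NCPoly R
  | [], v => Finsupp.single v 1
  | u, [] => Finsupp.single u 1
  | s :: u, t :: v =>
      Finsupp.mapDomain (fun w => s :: w) (stuf q u (t :: v)) +
      Finsupp.mapDomain (fun w => t :: w) (stuf q (s :: u) v) +
      q • Finsupp.mapDomain (fun w => (s + t) :: w) (stuf q u v)
  termination_by u v => u.length + v.length
  decreasing_by all_goals (simp only [List.length_cons]; omega)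

/-- Bilinear extension of the `q`-stuffle product to polynomials. -/
noncomputable def stufP (q : R) (P Q : NCPoly R) : NCPoly R :=
  P.sum fun u a => Q.sum fun v b => (a * b) • stuf q u v

/-- Concatenation product of polynomials. -/
noncomputable def concP (P Q : NCPoly R) : NCPoly R :=
  P.sum fun u a => Q.sum fun v b => Finsupp.single (u ++ v) (a * b)

/-- Concatenation product of a list of polynomials. -/
noncomputable def concList : List (NCPoly R) → NCPoly R
  | [] => Finsupp.single [] 1
  | P :: L => concP P (concList L)

/-- `q`-stuffle product of a list of words. -/
noncomputable def stufList (q : R) : List Word → NCPoly R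
  | [] => Finsupp.single [] 1
  | u :: L => stufP q (Finsupp.single u 1) (stufList q L)

/-- A formal power series over `Y` is a function `Word → R`; `S w = ⟨S, w⟩`. -/
def unitS : Word → R := fun w => if w = [] then 1 else 0

/-- Pairing `⟨S, P⟩ = Σ_w ⟨S,w⟩⟨P,w⟩` between a series and a polynomial. -/
noncomputable def pairS (S : Word → R) (P : NCPoly R) : R := P.sum fun w c => c * S w

/-- Pairing between two polynomials. -/
noncomputable def pairP (P Q : NCPoly R) : R := Q.sum fun w c => c * P w

/-- The finite set of all words of weight `n`. -/
noncomputable def wordsOfWeight : ℕ → Finset Word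
  | 0 => {[]}
  | n + 1 =>
      (Finset.range (n + 1)).attach.biUnion fun i =>
        (wordsOfWeight i.1).image fun w => (n + 1 - i.1).toPNat' :: w
  termination_by n => n
  decreasing_by exact Finset.mem_range.mp i.2

/-- All words of weight at most `n`. -/
noncomputable def wordsUpTo (n : ℕ) : Finset Word := (Finset.range (n + 1)).biUnion wordsOfWeight

/-- The `q`-stuffle product of two formal power series (coefficient-wise, the sum
is finite since the `q`-stuffle preserves weight). -/
noncomputable def stufS (q : R) (S T : Word → R) : Word → R :=
  fun w => ∑ u ∈ wordsUpTo (weight w), ∑ v ∈ wordsUpTo (weight w),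
    S u * T v * (stuf q u v) w

/-- `q`-stuffle product of a list of series. -/
noncomputable def stufSList (q : R) (L : List (Word → R)) : Word → R :=
  L.foldr (stufS q) unitS

/-- All ways of writing a word as a concatenation of nonempty words. -/
noncomputable def splits : Word → Finset (List Word)
  | [] => {[]}
  | a :: v =>
      (Finset.range (v.length + 1)).attach.biUnion fun i =>
        (splits (v.drop i.1)).image fun L => (a :: v.take i.1) :: L
  termination_by w => w.length
  decreasing_by simp [List.length_drop] <;> omega

/-- Lists of length `n` with entries in the finite set `s`. -/
noncomputable def tuples (s : Finset Word) : ℕ → Finset (List Word)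
  | 0 => {[]}
  | n + 1 => s.biUnion fun u => (tuples s n).image fun L => u :: L

/-- The Eulerian-type projector `π₁` associated to the `q`-stuffle:
`π₁(w) = Σ_{k≥1} ((-1)^{k-1}/k) Σ_{u_1,…,u_k ∈ Y⁺} ⟨w | u_1 ⊛_q ⋯ ⊛_q u_k⟩ u_1⋯u_k`. -/
noncomputable def qpi1 [Algebra ℚ R] (q : R) (w : Word) : NCPoly R :=
  ∑ v ∈ wordsUpTo (weight w),
    Finsupp.single v
      (∑ n ∈ Finset.Icc 1 (weight w),
        ((-1 : ℚ) ^ (n - 1) / n) •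
          ∑ L ∈ (splits v).filter (fun L => L.length = n), (stufList q L) w)

/-- The adjoint projector `π̌₁`:
`π̌₁(w) = Σ_{k≥1} ((-1)^{k-1}/k) Σ_{u_1⋯u_k = w, u_i ∈ Y⁺} u_1 ⊛_q ⋯ ⊛_q u_k`. -/
noncomputable def qpi1Check [Algebra ℚ R] (q : R) (w : Word) : NCPoly R :=
  ∑ L ∈ splits w, ((-1 : ℚ) ^ (L.length - 1) / (L.length : ℚ)) • stufList q L

/-- `S` is primitive for the coproduct dual to the `q`-stuffle:
`Δ S = S ⊗ 1 + 1 ⊗ S`, read off on the coefficient at `u ⊗ v`. -/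
def IsPrimitive (q : R) (S : Word → R) : Prop :=
  ∀ u v : Word, pairS S (stuf q u v) =
    (if v = [] then S u else 0) + (if u = [] then S v else 0)

/-- `S` is group-like for the coproduct dual to the `q`-stuffle: `Δ S = S ⊗ S`. -/
def IsGroupLike (q : R) (S : Word → R) : Prop :=
  ∀ u v : Word, pairS S (stuf q u v) = S u * S v

/-- Concatenation (Cauchy) product of two series. -/
noncomputable def concS (S T : Word → R) : Word → R :=
  fun w => ∑ i ∈ Finset.range (w.length + 1), S (w.take i) * T (w.drop i)

/-- Concatenation powers of a series. -/
noncomputable def concPow (S : Word → R) : ℕ → Word → R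
  | 0 => unitS
  | n + 1 => concS S (concPow S n)

/-- Formal logarithm `log S = Σ_{n≥1} (-1)^{n-1} (S-1)^n / n` (for `S` with constant term 1,
the sum at a word `w` has at most `|w|` nonzero terms). -/
noncomputable def logS [Algebra ℚ R] (S : Word → R) : Word → R :=
  fun w => ∑ n ∈ Finset.Icc 1 w.length,
    ((-1 : ℚ) ^ (n - 1) / n) • concPow (S - unitS) n w

/-- The product on `R⟨⟨Y⟩⟩ ⊗^ R⟨⟨Y⟩⟩` where the left factor is multiplied by `⊛_q`
and the right factor by concatenation; a tensor is a function `Word → Word → R`. -/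
noncomputable def tmul (q : R) (A B : Word → Word → R) : Word → Word → R :=
  fun w w' => ∑ i ∈ Finset.range (w'.length + 1),
    stufS q (fun u => A u (w'.take i)) (fun u => B u (w'.drop i)) w

/-- The unit `1 ⊗ 1` of the tensor algebra. -/
def unitT : Word → Word → R := fun u v => if u = [] ∧ v = [] then 1 else 0

/-- Powers in the tensor algebra. -/
noncomputable def tpow (q : R) (A : Word → Word → R) : ℕ → Word → Word → R
  | 0 => unitT
  | n + 1 => tmul q A (tpow q A n)

/-- Formal logarithm in the tensor algebra. -/
noncomputable def logT [Algebra ℚ R] (q : R) (A : Word → Word → R) : Word → Word → R :=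
  fun w w' => ∑ n ∈ Finset.Icc 1 w'.length,
    ((-1 : ℚ) ^ (n - 1) / n) • tpow q (A - unitT) n w w'

/-- The diagonal series `D_Y = Σ_w w ⊗ w`. -/
def diagT : Word → Word → R := fun u v => if u = v then 1 else 0

/-- Order on words: lexicographic extension of the order `y_1 > y_2 > ⋯` on letters
(`wlt u v` means `u < v`). -/
def wlt (u v : Word) : Prop := List.Lex (fun a b : ℕ+ => b < a) u v

/-- A word is Lyndon if it is nonempty and strictly smaller than each of its proper suffixes. -/
def IsLyndon (w : Word) : Prop :=
  w ≠ [] ∧ ∀ i, 0 < i → i < w.length → wlt w (w.drop i)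

/-- Index of the standard factorization of a Lyndon word: the right factor is the
longest proper Lyndon suffix. -/
noncomputable def stdIdx (l : Word) : ℕ :=
  sInf {i | 0 < i ∧ i < l.length ∧ IsLyndon (l.drop i)}

/-- The family `Π_l`, for `l` a Lyndon word: `Π_{y_k} = π₁(y_k)`, and
`Π_l = [Π_s, Π_r]` for the standard factorization `l = (s, r)`. -/
noncomputable def PiL [Algebra ℚ R] (q : R) : Word → NCPoly R
  | [] => Finsupp.single [] 1
  | [s] => qpi1 q [s]
  | a :: b :: w =>
      if h : 0 < stdIdx (a :: b :: w) ∧ stdIdx (a :: b :: w) < (a :: b :: w).length then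
        concP (PiL q ((a :: b :: w).take (stdIdx (a :: b :: w))))
              (PiL q ((a :: b :: w).drop (stdIdx (a :: b :: w)))) -
        concP (PiL q ((a :: b :: w).drop (stdIdx (a :: b :: w))))
              (PiL q ((a :: b :: w).take (stdIdx (a :: b :: w))))
      else 0
  termination_by w => w.length
  decreasing_by all_goals (simp only [List.length_take, List.length_drop, List.length_cons] at h ⊢; omega)

/-- The Lyndon factorization of a word into a nonincreasing product of Lyndon words
(repeatedly take the longest Lyndon prefix). -/
noncomputable def lynFact : Word → List Word
  | [] => []
  | a :: w =>
      (a :: w).take (sSup {i | i ≤ w.length ∧ IsLyndon ((a :: w).take (i + 1))} + 1) ::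
      lynFact ((a :: w).drop (sSup {i | i ≤ w.length ∧ IsLyndon ((a :: w).take (i + 1))} + 1))
  termination_by w => w.length
  decreasing_by simp only [List.length_drop, List.length_cons]; omega

/-- The PBW-type basis: `Π_w = Π_{l_1} ⋯ Π_{l_n}` for the Lyndon factorization
`w = l_1 ⋯ l_n`, `l_1 ≥ ⋯ ≥ l_n`. -/
noncomputable def PiW [Algebra ℚ R] (q : R) (w : Word) : NCPoly R :=
  concList ((lynFact w).map (PiL q))

instance : IsStrictTotalOrder ℕ+ (fun a b : ℕ+ => b < a) where
  trichotomous a b := by rcases lt_trichotomy a b with h|h|h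
                         · exact fun _ h2 => absurd h h2
                         · exact fun _ _ => h
                         · exact fun h1 _ => absurd h h1
  irrefl a := lt_irrefl a
  trans a b c h1 h2 := lt_trans h2 h1

instance : IsStrictTotalOrder (List ℕ+) (List.Lex (fun a b : ℕ+ => b < a)) :=
  { isStrictWeakOrder_of_isOrderConnected with }

lemma wlt_trans {u v w : Word} (h : wlt u v) (h' : wlt v w) : wlt u w :=
  trans_of (List.Lex (fun a b : ℕ+ => b < a)) h h'

lemma wlt_irrefl (u : Word) (h : wlt u u) : False :=
  irrefl_of (List.Lex (fun a b : ℕ+ => b < a)) u h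

lemma wlt_asymm {u v : Word} (h : wlt u v) (h' : wlt v u) : False :=
  wlt_irrefl u (wlt_trans h h')

lemma wlt_total {u v : Word} (h : u ≠ v) : wlt u v ∨ wlt v u := by
  rcases trichotomous_of (List.Lex (fun a b : ℕ+ => b < a)) u v with h1|h1|h1
  · exact .inl h1
  · exact absurd h1 h
  · exact .inr h1

lemma wlt_append_left {x y : Word} (c : Word) (h : wlt x y) : wlt (c ++ x) (c ++ y) := by
  induction c with
  | nil => exact h
  | cons a c ih => exact List.Lex.cons ih

lemma wlt_of_append_left {x y : Word} (c : Word) (h : wlt (c ++ x) (c ++ y)) : wlt x y := by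
  induction c with
  | nil => exact h
  | cons a c ih =>
      cases h with
      | rel h' => exact absurd h' (lt_irrefl a)
      | cons h' => exact ih h'

lemma weight_nil : weight [] = 0 := rfl

lemma weight_cons (a : ℕ+) (t : Word) : weight (a :: t) = (a : ℕ) + weight t := by
  simp [weight]

lemma weight_append (u v : Word) : weight (u ++ v) = weight u + weight v := by
  simp [weight]

lemma weight_pos {u : Word} (h : u ≠ []) : 0 < weight u := by
  cases u with
  | nil => simp at h
  | cons a t => rw [weight_cons]; have := a.pos; omega

lemma wlt_append_of_weight_eq {u u' : Word} (h : wlt u u') (hw : weight u = weight u') :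
    ∀ v v' : Word, wlt (u ++ v) (u' ++ v') := by
  induction h with
  | @nil a l =>
      intro v v'
      exfalso
      have h2 := weight_pos (u := a :: l) (by simp)
      rw [weight_nil] at hw; omega
  | @rel a l₁ b l₂ hab => intro v v'; exact List.Lex.rel hab
  | @cons a l₁ l₂ h ih =>
      intro v v'
      refine List.Lex.cons (ih ?_ v v')
      rw [weight_cons, weight_cons] at hw; omega

lemma wlt_append_right {x y : Word} (h : wlt x y) (c : Word) : wlt x (y ++ c) := by
  induction h with
  | nil => exact (List.Lex.nil)
  | rel hab => exact List.Lex.rel hab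
  | cons _ ih => exact List.Lex.cons ih

lemma wlt_prefix_or_append {x y : Word} (h : wlt x y) (c c' : Word) :
    x <+: y ∨ wlt (x ++ c) (y ++ c') := by
  induction h with
  | nil => exact .inl (List.nil_prefix)
  | rel hab => exact .inr (List.Lex.rel hab)
  | @cons a l₁ l₂ h ih =>
      rcases ih with h1 | h1
      · exact .inl (List.cons_prefix_cons.mpr ⟨rfl, h1⟩)
      · exact .inr (List.Lex.cons h1)
lemma exists_wlt_min (T : Finset ℕ) (hT : T.Nonempty) (f : ℕ → Word) :
    ∃ i ∈ T, ∀ j ∈ T, f i = f j ∨ wlt (f i) (f j) := by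
  classical
  induction T using Finset.induction_on with
  | empty => exact absurd hT (by simp)
  | @insert a s ha ih =>
      by_cases hs : s.Nonempty
      · obtain ⟨i, hi, hmin⟩ := ih hs
        by_cases h : f i = f a ∨ wlt (f i) (f a)
        · refine ⟨i, Finset.mem_insert_of_mem hi, ?_⟩
          intro j hj
          rcases Finset.mem_insert.mp hj with rfl | hj
          · exact h
          · exact hmin j hj
        · push_neg at h
          obtain ⟨h1, h2⟩ := h
          have hlt : wlt (f a) (f i) := (wlt_total (Ne.symm h1)).resolve_right h2
          refine ⟨a, Finset.mem_insert_self a s, ?_⟩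
          intro j hj
          rcases Finset.mem_insert.mp hj with rfl | hj
          · exact .inl rfl
          · rcases hmin j hj with h3 | h3
            · exact .inr (h3 ▸ hlt)
            · exact .inr (wlt_trans hlt h3)
      · rw [Finset.not_nonempty_iff_eq_empty] at hs
        subst hs
        exact ⟨a, Finset.mem_insert_self a _, by
          intro j hj
          rcases Finset.mem_insert.mp hj with rfl | hj
          · exact .inl rfl
          · simp at hj⟩

lemma isLyndon_of_length_one {w : Word} (h : w.length = 1) : IsLyndon w := by
  refine ⟨by intro hw; simp [hw] at h, ?_⟩
  intro i h1 h2
  omega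

/-- the minimal proper suffix -/
lemma exists_min_suffix {l : Word} (h2 : 2 ≤ l.length) :
    ∃ i₀, 0 < i₀ ∧ i₀ < l.length ∧
      ∀ j, 0 < j → j < l.length → l.drop i₀ = l.drop j ∨ wlt (l.drop i₀) (l.drop j) := by
  obtain ⟨i₀, hi₀, hmin⟩ := exists_wlt_min (Finset.Ioo 0 l.length) ⟨1, by
    simp; omega⟩ l.drop
  simp only [Finset.mem_Ioo] at hi₀
  exact ⟨i₀, hi₀.1, hi₀.2, fun j hj1 hj2 => hmin j (Finset.mem_Ioo.mpr ⟨hj1, hj2⟩)⟩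

lemma min_suffix_lyndon {l : Word} {i₀ : ℕ} (h1 : 0 < i₀) (h2 : i₀ < l.length)
    (hmin : ∀ j, 0 < j → j < l.length → l.drop i₀ = l.drop j ∨ wlt (l.drop i₀) (l.drop j)) :
    IsLyndon (l.drop i₀) := by
  constructor
  · intro h
    have := congrArg List.length h
    simp at this; omega
  · intro t ht1 ht2
    rw [List.length_drop] at ht2
    rw [List.drop_drop]
    rcases hmin (t + i₀) (by omega) (by omega) with h | h
    · exfalso
      have := congrArg List.length h
      simp at this; omega
    · rwa [Nat.add_comm t i₀] at h

lemma stdIdx_min_suffix {l : Word} {i₀ : ℕ} (h1 : 0 < i₀) (h2 : i₀ < l.length)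
    (hmin : ∀ j, 0 < j → j < l.length → l.drop i₀ = l.drop j ∨ wlt (l.drop i₀) (l.drop j)) :
    stdIdx l = i₀ := by
  have hmem : i₀ ∈ {i | 0 < i ∧ i < l.length ∧ IsLyndon (l.drop i)} :=
    ⟨h1, h2, min_suffix_lyndon h1 h2 hmin⟩
  refine le_antisymm (Nat.sInf_le hmem) ?_
  refine le_csInf ⟨i₀, hmem⟩ ?_
  intro j hj
  obtain ⟨hj1, hj2, hj3⟩ := hj
  by_contra hlt
  push_neg at hlt
  -- j < i₀, drop j is Lyndon, drop i₀ is a proper suffix of drop j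
  have hd : (l.drop j).drop (i₀ - j) = l.drop i₀ := by
    rw [List.drop_drop]; congr 1; omega
  have hsuf : wlt (l.drop j) (l.drop i₀) := by
    have := hj3.2 (i₀ - j) (by omega) (by rw [List.length_drop]; omega)
    rwa [hd] at this
  rcases hmin j hj1 hj2 with h | h
  · have := congrArg List.length h
    simp at this; omega
  · exact wlt_asymm h hsuf

lemma take_lyndon {l : Word} (hl : IsLyndon l) {i₀ : ℕ} (h1 : 0 < i₀) (h2 : i₀ < l.length)
    (hmin : ∀ j, 0 < j → j < l.length → l.drop i₀ = l.drop j ∨ wlt (l.drop i₀) (l.drop j)) :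
    IsLyndon (l.take i₀) := by
  set s := l.take i₀ with hs
  set r := l.drop i₀ with hr
  have hslen : s.length = i₀ := by rw [hs, List.length_take]; omega
  have hsr : s ++ r = l := List.take_append_drop i₀ l
  constructor
  · intro h
    have := congrArg List.length h
    rw [hslen] at this; simp at this; omega
  · intro t ht1 ht2
    rw [hslen] at ht2
    -- u' = s.drop t ; s.drop t ++ r = l.drop t
    have key : ∀ p, p ≤ i₀ → s.drop p ++ r = l.drop p := by
      intro p hp
      conv_rhs => rw [← hsr]
      rw [List.drop_append, hslen, show p - i₀ = 0 from by omega,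
        List.drop_zero]
    have hne : s ≠ s.drop t := by
      intro h
      have := congrArg List.length h
      rw [List.length_drop, hslen] at this; omega
    rcases wlt_total hne with h | h
    · exact h
    · exfalso
      rcases wlt_prefix_or_append h r r with hpre | happ
      · -- s.drop t is a proper prefix of s: s = (s.drop t) ++ z
        obtain ⟨z, hz⟩ := hpre
        have hplen : (s.drop t).length = i₀ - t := by rw [List.length_drop, hslen]
        have hzdrop : z = s.drop (i₀ - t) := by
          have h5 := congrArg (List.drop (s.drop t).length) hz
          rw [List.drop_left, hplen] at h5
          exact h5
        -- (*) wlt r (z ++ r)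
        have hstar : wlt r (z ++ r) := by
          have hzr : z ++ r = l.drop (i₀ - t) := by rw [hzdrop]; exact key (i₀ - t) (by omega)
          rcases hmin (i₀ - t) (by omega) (by omega) with hq | hq
          · exfalso
            have := congrArg List.length hq
            rw [List.length_drop, List.length_drop] at this
            omega
          · rwa [← hzr] at hq
        -- (**) wlt (z ++ r) r  from Lyndon: wlt l (l.drop t), l = (s.drop t) ++ (z ++ r)
        have hstar2 : wlt (z ++ r) r := by
          have hlyn := hl.2 t ht1 (by omega)
          have hldt : l.drop t = s.drop t ++ r := (key t (by omega)).symm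
          have hleq : l = s.drop t ++ (z ++ r) := by
            rw [← List.append_assoc, hz, hsr]
          rw [hldt, hleq] at hlyn
          exact wlt_of_append_left _ hlyn
        exact wlt_asymm hstar hstar2
      · -- wlt (s.drop t ++ r) (s ++ r) = wlt (l.drop t) l, contradicting Lyndon
        rw [key t (by omega), hsr] at happ
        exact wlt_asymm happ (hl.2 t ht1 (by omega))
section Stuffle
variable {q : R}

lemma mapDomain_ne_zero {f : Word → Word} {P : NCPoly R} {w : Word}
    (h : Finsupp.mapDomain f P w ≠ 0) : ∃ w', P w' ≠ 0 ∧ f w' = w := by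
  classical
  rw [Finsupp.mapDomain, Finsupp.sum_apply, Finsupp.sum] at h
  obtain ⟨w', hmem, hw'⟩ := Finset.exists_ne_zero_of_sum_ne_zero h
  refine ⟨w', Finsupp.mem_support_iff.mp hmem, ?_⟩
  by_contra hne
  rw [Finsupp.single_apply, if_neg hne] at hw'
  exact hw' rfl

lemma stuf_nil_left (v : Word) : stuf q [] v = Finsupp.single v 1 := by
  cases v <;> rw [stuf]

lemma stuf_cons_nil (s : ℕ+) (u : Word) : stuf q (s :: u) [] = Finsupp.single (s :: u) 1 := by
  rw [stuf]; simp

lemma stuf_weight : ∀ (N : ℕ) (u v w : Word), u.length + v.length ≤ N →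
    (stuf q u v) w ≠ 0 → weight w = weight u + weight v := by
  intro N
  induction N with
  | zero =>
      intro u v w hN h
      obtain rfl : u = [] := List.length_eq_zero_iff.mp (by omega)
      rw [stuf_nil_left, Finsupp.single_apply_ne_zero] at h
      rw [← h.1]; simp [weight_nil]
  | succ N ih =>
      intro u v w hN h
      match u, v with
      | [], v =>
          rw [stuf_nil_left, Finsupp.single_apply_ne_zero] at h
          rw [← h.1]; simp [weight_nil]
      | s :: u, [] =>
          rw [stuf_cons_nil, Finsupp.single_apply_ne_zero] at h
          rw [← h.1]; simp [weight_nil]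
      | s :: u, t :: v =>
          rw [stuf] at h
          simp only [Finsupp.add_apply, Finsupp.smul_apply] at h
          simp only [List.length_cons] at hN
          have hor : Finsupp.mapDomain (fun w => s :: w) (stuf q u (t :: v)) w ≠ 0 ∨
              Finsupp.mapDomain (fun w => t :: w) (stuf q (s :: u) v) w ≠ 0 ∨
              Finsupp.mapDomain (fun w => (s + t) :: w) (stuf q u v) w ≠ 0 := by
            by_contra hc
            push_neg at hc
            rw [hc.1, hc.2.1, hc.2.2] at h
            simp at h
          rcases hor with h1 | h1 | h1
          · obtain ⟨w', hw', hfw⟩ := mapDomain_ne_zero h1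
            have := ih u (t :: v) w' (by simp; omega) hw'
            rw [← hfw, weight_cons, this, weight_cons, weight_cons]; ring
          · obtain ⟨w', hw', hfw⟩ := mapDomain_ne_zero h1
            have := ih (s :: u) v w' (by simp; omega) hw'
            rw [← hfw, weight_cons, this, weight_cons, weight_cons]; ring
          · obtain ⟨w', hw', hfw⟩ := mapDomain_ne_zero h1
            have := ih u v w' (by omega) hw'
            rw [← hfw, weight_cons, this, weight_cons, weight_cons, PNat.add_coe]; ring

lemma stufP_ne_zero {P Q : NCPoly R} {w : Word} (h : (stufP q P Q) w ≠ 0) :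
    ∃ u v, P u ≠ 0 ∧ Q v ≠ 0 ∧ (stuf q u v) w ≠ 0 := by
  rw [stufP, Finsupp.sum_apply, Finsupp.sum] at h
  obtain ⟨u, hmem, hu⟩ := Finset.exists_ne_zero_of_sum_ne_zero h
  rw [Finsupp.sum_apply, Finsupp.sum] at hu
  obtain ⟨v, hvmem, hv⟩ := Finset.exists_ne_zero_of_sum_ne_zero hu
  refine ⟨u, v, Finsupp.mem_support_iff.mp hmem, Finsupp.mem_support_iff.mp hvmem, ?_⟩
  intro hc
  rw [Finsupp.smul_apply, hc, smul_zero] at hv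
  exact hv rfl

lemma stufList_weight : ∀ (L : List Word) (w : Word), (stufList q L) w ≠ 0 →
    weight w = weight L.flatten := by
  intro L
  induction L with
  | nil =>
      intro w h
      rw [stufList, Finsupp.single_apply_ne_zero] at h
      rw [h.1]
      rfl
  | cons u L ih =>
      intro w h
      rw [stufList] at h
      obtain ⟨u', v, hu', hv, hst⟩ := stufP_ne_zero h
      rw [Finsupp.single_apply_ne_zero] at hu'
      have h1 := stuf_weight (q := q) (u'.length + v.length) u' v w le_rfl hst
      rw [h1, ← hu'.1, ih v hv, List.flatten_cons, weight_append]

lemma splits_flatten : ∀ (N : ℕ) (v : Word) (L : List Word), v.length ≤ N →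
    L ∈ splits v → L.flatten = v := by
  intro N
  induction N with
  | zero =>
      intro v L hN h
      obtain rfl : v = [] := List.length_eq_zero_iff.mp (by omega)
      rw [splits.eq_1, Finset.mem_singleton] at h
      rw [h]
      rfl
  | succ N ih =>
      intro v L hN h
      match v with
      | [] =>
          rw [splits.eq_1, Finset.mem_singleton] at h
          rw [h]; rfl
      | a :: v' =>
          rw [splits.eq_2, Finset.mem_biUnion] at h
          obtain ⟨i, _, hL⟩ := h
          rw [Finset.mem_image] at hL
          obtain ⟨L', hL', rfl⟩ := hL
          have hi : i.1 ≤ v'.length := by have := i.2; rw [Finset.mem_range] at this; omega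
          have := ih (v'.drop i.1) L' (by rw [List.length_drop]; simp at hN; omega) hL'
          rw [List.flatten_cons, this, List.cons_append, List.take_append_drop]
end Stuffle
def Good (l : Word) (P : NCPoly R) : Prop :=
  P l = 1 ∧ ∀ v : Word, P v ≠ 0 → v ≠ l → wlt l v ∧ weight v = weight l

lemma concP_ne_zero {P Q : NCPoly R} {w : Word} (h : (concP P Q) w ≠ 0) :
    ∃ u v, P u ≠ 0 ∧ Q v ≠ 0 ∧ u ++ v = w := by
  classical
  rw [concP, Finsupp.sum_apply, Finsupp.sum] at h
  obtain ⟨u, hmem, hu⟩ := Finset.exists_ne_zero_of_sum_ne_zero h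
  rw [Finsupp.sum_apply, Finsupp.sum] at hu
  obtain ⟨v, hvmem, hv⟩ := Finset.exists_ne_zero_of_sum_ne_zero hu
  refine ⟨u, v, Finsupp.mem_support_iff.mp hmem, Finsupp.mem_support_iff.mp hvmem, ?_⟩
  by_contra hne
  rw [Finsupp.single_apply, if_neg hne] at hv
  exact hv rfl

lemma concP_apply_eq_zero {P Q : NCPoly R} {w : Word}
    (h : ∀ u v, P u ≠ 0 → Q v ≠ 0 → u ++ v ≠ w) : (concP P Q) w = 0 := by
  by_contra hc
  obtain ⟨u, v, hu, hv, huv⟩ := concP_ne_zero hc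
  exact h u v hu hv huv

lemma concP_apply_unique {P Q : NCPoly R} {s r : Word}
    (h : ∀ u v, P u ≠ 0 → Q v ≠ 0 → u ++ v = s ++ r → u = s ∧ v = r) :
    (concP P Q) (s ++ r) = P s * Q r := by
  classical
  rw [concP, Finsupp.sum_apply, Finsupp.sum]
  have hterm : ∀ u ∈ P.support, (Finsupp.sum Q fun v b => Finsupp.single (u ++ v) (P u * b))
      (s ++ r) = if u = s then P s * Q r else 0 := by
    intro u hmem
    rw [Finsupp.sum_apply, Finsupp.sum]
    have hu := Finsupp.mem_support_iff.mp hmem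
    by_cases hus : u = s
    · subst hus
      rw [if_pos rfl]
      have hterm2 : ∀ v ∈ Q.support, (Finsupp.single (u ++ v) (P u * Q v)) (u ++ r) =
          if v = r then P u * Q r else 0 := by
        intro v hvmem
        have hv := Finsupp.mem_support_iff.mp hvmem
        by_cases hvr : v = r
        · subst hvr; rw [if_pos rfl, Finsupp.single_apply, if_pos rfl]
        · rw [if_neg hvr, Finsupp.single_apply, if_neg]
          intro hc
          exact hvr (h u v hu hv hc).2
      rw [Finset.sum_congr rfl hterm2, Finset.sum_ite_eq' Q.support r]
      by_cases hr : r ∈ Q.support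
      · rw [if_pos hr]
      · rw [if_neg hr]
        rw [Finsupp.notMem_support_iff] at hr
        rw [hr, mul_zero]
    · rw [if_neg hus]
      refine Finset.sum_eq_zero ?_
      intro v hvmem
      have hv := Finsupp.mem_support_iff.mp hvmem
      rw [Finsupp.single_apply, if_neg]
      intro hc
      exact hus (h u v hu hv hc).1
  rw [Finset.sum_congr rfl hterm, Finset.sum_ite_eq' P.support s]
  by_cases hs : s ∈ P.support
  · rw [if_pos hs]
  · rw [if_neg hs]
    rw [Finsupp.notMem_support_iff] at hs
    rw [hs, zero_mul]

lemma good_step {s r : Word} {Ps Pr : NCPoly R} (hs : Good s Ps) (hr : Good r Pr)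
    (hlt : wlt (s ++ r) (r ++ s)) :
    Good (s ++ r) (concP Ps Pr - concP Pr Ps) := by
  have hcs : ∀ u, Ps u ≠ 0 → u = s ∨ (wlt s u ∧ weight u = weight s) := by
    intro u hu
    by_cases h : u = s
    · exact .inl h
    · exact .inr (hs.2 u hu h)
  have hcr : ∀ v, Pr v ≠ 0 → v = r ∨ (wlt r v ∧ weight v = weight r) := by
    intro v hv
    by_cases h : v = r
    · exact .inl h
    · exact .inr (hr.2 v hv h)
  constructor
  · rw [Finsupp.sub_apply]
    have hA : (concP Ps Pr) (s ++ r) = 1 := by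
      rw [concP_apply_unique, hs.1, hr.1, one_mul]
      intro u v hu hv huv
      rcases hcs u hu with rfl | ⟨h1, h2⟩
      · exact ⟨rfl, List.append_cancel_left huv⟩
      · exfalso
        have := wlt_append_of_weight_eq h1 h2.symm r v
        rw [huv] at this
        exact wlt_irrefl _ this
    have hB : (concP Pr Ps) (s ++ r) = 0 := by
      refine concP_apply_eq_zero ?_
      intro u v hu hv huv
      rcases hcr u hu with rfl | ⟨h1, h2⟩
      · rcases hcs v hv with rfl | ⟨h3, h4⟩
        · rw [huv] at hlt
          exact wlt_irrefl _ hlt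
        · have h5 := wlt_append_left u h3
          rw [huv] at h5
          exact wlt_asymm hlt h5
      · have h5 := wlt_append_of_weight_eq h1 h2.symm s v
        rw [huv] at h5
        exact wlt_asymm hlt h5
    rw [hA, hB, sub_zero]
  · intro v₀ hv₀ hne
    rw [Finsupp.sub_apply] at hv₀
    have hor : (concP Ps Pr) v₀ ≠ 0 ∨ (concP Pr Ps) v₀ ≠ 0 := by
      by_contra hc
      push_neg at hc
      rw [hc.1, hc.2, sub_zero] at hv₀
      exact hv₀ rfl
    rcases hor with h1 | h1
    · obtain ⟨u, v, hu, hv, huv⟩ := concP_ne_zero h1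
      rcases hcs u hu with rfl | ⟨ho1, ho2⟩
      · rcases hcr v hv with rfl | ⟨ho3, ho4⟩
        · exact absurd huv (Ne.symm hne)
        · refine ⟨?_, ?_⟩
          · rw [← huv]; exact wlt_append_left u ho3
          · rw [← huv, weight_append, weight_append, ho4]
      · refine ⟨?_, ?_⟩
        · rw [← huv]; exact wlt_append_of_weight_eq ho1 ho2.symm r v
        · rcases hcr v hv with rfl | ⟨ho3, ho4⟩
          · rw [← huv, weight_append, weight_append, ho2]
          · rw [← huv, weight_append, weight_append, ho2, ho4]
    · obtain ⟨u, v, hu, hv, huv⟩ := concP_ne_zero h1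
      have hge : v₀ = r ++ s ∨ wlt (r ++ s) v₀ := by
        rcases hcr u hu with rfl | ⟨ho1, ho2⟩
        · rcases hcs v hv with rfl | ⟨ho3, ho4⟩
          · exact .inl huv.symm
          · refine .inr ?_
            rw [← huv]; exact wlt_append_left u ho3
        · refine .inr ?_
          rw [← huv]; exact wlt_append_of_weight_eq ho1 ho2.symm s v
      have hwt : weight v₀ = weight s + weight r := by
        have h2 : weight u = weight r := by
          rcases hcr u hu with rfl | ⟨_, ho⟩
          · rfl
          · exact ho
        have h4 : weight v = weight s := by
          rcases hcs v hv with rfl | ⟨_, ho⟩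
          · rfl
          · exact ho
        rw [← huv, weight_append, h2, h4]; ring
      refine ⟨?_, by rw [hwt, weight_append]⟩
      rcases hge with rfl | hge
      · exact hlt
      · exact wlt_trans hlt hge
lemma weight_single (k : ℕ+) : weight [k] = (k : ℕ) := by simp [weight]

lemma splits_nil : splits ([] : Word) = {[]} := by rw [splits.eq_1]

lemma splits_singleton (k : ℕ+) : splits [k] = {[[k]]} := by
  ext L
  rw [splits.eq_2]
  simp only [List.length_nil, zero_add, Finset.mem_biUnion, Finset.mem_attach, true_and,
    Finset.mem_image, Finset.mem_singleton]
  constructor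
  · rintro ⟨i, L', hL', rfl⟩
    have hi : i.1 = 0 := by have h2 := Finset.mem_range.mp i.2; omega
    rw [hi, List.drop_nil, splits_nil, Finset.mem_singleton] at hL'
    rw [hL', hi, List.take_nil]
  · rintro rfl
    exact ⟨⟨0, by simp⟩, [], by rw [List.drop_nil, splits_nil]; simp, by simp⟩

lemma stufList_single_single (q : R) (k : ℕ+) :
    stufList q [[k]] = Finsupp.single [k] 1 := by
  rw [stufList, stufList, stufP]
  rw [Finsupp.sum_single_index (by simp)]
  rw [Finsupp.sum_single_index (by simp)]
  rw [stuf_cons_nil, one_mul, one_smul]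

lemma mem_wordsUpTo_single (k : ℕ+) : [k] ∈ wordsUpTo (k : ℕ) := by
  rw [wordsUpTo, Finset.mem_biUnion]
  refine ⟨(k : ℕ), Finset.mem_range.mpr (by omega), ?_⟩
  obtain ⟨m, hm⟩ : ∃ m, (k : ℕ) = m + 1 := ⟨(k : ℕ) - 1, by have := k.pos; omega⟩
  rw [hm, wordsOfWeight, Finset.mem_biUnion]
  refine ⟨⟨0, Finset.mem_range.mpr (by omega)⟩, Finset.mem_attach _ _, ?_⟩
  rw [Finset.mem_image]
  refine ⟨[], by rw [wordsOfWeight]; simp, ?_⟩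
  have : m + 1 - 0 = m + 1 := by omega
  rw [this, ← hm, PNat.coe_toPNat']

lemma good_letter [Algebra ℚ R] (q : R) (k : ℕ+) : Good [k] (qpi1 q [k]) := by
  classical
  have happly : ∀ v₀ : Word, (qpi1 q [k]) v₀ =
      if v₀ ∈ wordsUpTo (weight [k]) then
        (∑ n ∈ Finset.Icc 1 (weight [k]),
          ((-1 : ℚ) ^ (n - 1) / n) •
            ∑ L ∈ (splits v₀).filter (fun L => L.length = n), (stufList q L) [k]) else 0 := by
    intro v₀
    rw [qpi1, Finset.sum_apply']
    rw [Finset.sum_congr rfl (fun v _ => Finsupp.single_apply)]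
    exact Finset.sum_ite_eq' _ _ _
  constructor
  · rw [happly, weight_single, if_pos (mem_wordsUpTo_single k)]
    rw [Finset.sum_eq_single_of_mem 1 (Finset.mem_Icc.mpr ⟨le_rfl, k.pos⟩)]
    · rw [splits_singleton]
      rw [Finset.filter_singleton, if_pos (by simp)]
      rw [Finset.sum_singleton, stufList_single_single]
      simp
    · intro n _ hn
      rw [splits_singleton, Finset.filter_singleton, if_neg (by simpa using (Ne.symm hn)),
        Finset.sum_empty, smul_zero]
  · intro v₀ hv₀ hne
    rw [happly] at hv₀
    by_cases hmem : v₀ ∈ wordsUpTo (weight [k])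
    swap
    · rw [if_neg hmem] at hv₀; exact absurd rfl hv₀
    rw [if_pos hmem] at hv₀
    obtain ⟨n, _, hn⟩ := Finset.exists_ne_zero_of_sum_ne_zero hv₀
    have hn2 : (∑ L ∈ (splits v₀).filter (fun L => L.length = n), (stufList q L) [k]) ≠ 0 := by
      intro hc; rw [hc, smul_zero] at hn; exact hn rfl
    obtain ⟨L, hLmem, hL⟩ := Finset.exists_ne_zero_of_sum_ne_zero hn2
    have hLsp : L ∈ splits v₀ := (Finset.mem_filter.mp hLmem).1
    have hwt : weight v₀ = (k : ℕ) := by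
      have h1 := stufList_weight L [k] hL
      rw [splits_flatten v₀.length v₀ L le_rfl hLsp, weight_single] at h1
      exact h1.symm
    refine ⟨?_, by rw [hwt, weight_single]⟩
    match v₀, hne, hwt with
    | [], hne, hwt => exfalso; rw [weight_nil] at hwt; have := k.pos; omega
    | b :: t, hne, hwt =>
        rcases lt_trichotomy b k with hb | hb | hb
        · exact List.Lex.rel hb
        · subst hb
          match t with
          | [] => exact absurd rfl hne
          | c :: t' => exact List.Lex.cons List.Lex.nil
        · exfalso
          rw [weight_cons] at hwt
          have : (k : ℕ) < (b : ℕ) := (PNat.coe_lt_coe k b).mpr hb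
          omega
lemma good_PiL [Algebra ℚ R] (q : R) : ∀ (N : ℕ) (l : Word), l.length ≤ N → IsLyndon l →
    Good l (PiL q l) := by
  intro N
  induction N with
  | zero =>
      intro l hN hl
      obtain rfl : l = [] := List.length_eq_zero_iff.mp (by omega)
      exact absurd rfl hl.1
  | succ N ih =>
      intro l hN hl
      match l with
      | [] => exact absurd rfl hl.1
      | [a] =>
          rw [show PiL q [a] = qpi1 q [a] from by rw [PiL]]
          exact good_letter q a
      | a :: b :: w =>
          set l := a :: b :: w with hldef
          have hlen2 : 2 ≤ l.length := by rw [hldef]; simp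
          obtain ⟨i₀, hi1, hi2, hmin⟩ := exists_min_suffix hlen2
          have hstd : stdIdx l = i₀ := stdIdx_min_suffix hi1 hi2 hmin
          have hrlyn : IsLyndon (l.drop i₀) := min_suffix_lyndon hi1 hi2 hmin
          have hslyn : IsLyndon (l.take i₀) := take_lyndon hl hi1 hi2 hmin
          have hcond : 0 < stdIdx l ∧ stdIdx l < l.length := by rw [hstd]; exact ⟨hi1, hi2⟩
          have heq : PiL q l =
              concP (PiL q (l.take i₀)) (PiL q (l.drop i₀)) -
              concP (PiL q (l.drop i₀)) (PiL q (l.take i₀)) := by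
            rw [PiL, dif_pos hcond, hstd]
          rw [heq]
          have hgs : Good (l.take i₀) (PiL q (l.take i₀)) := by
            refine ih (l.take i₀) ?_ hslyn
            rw [List.length_take]
            omega
          have hgr : Good (l.drop i₀) (PiL q (l.drop i₀)) := by
            refine ih (l.drop i₀) ?_ hrlyn
            rw [List.length_drop]
            omega
          have hlt : wlt (l.take i₀ ++ l.drop i₀) (l.drop i₀ ++ l.take i₀) := by
            rw [List.take_append_drop]
            exact wlt_append_right (hl.2 i₀ hi1 hi2) (l.take i₀)
          have := good_step hgs hgr hlt
          rwa [List.take_append_drop] at this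

/-- For each Lyndon word `l` (alphabet ordered by `y_1 > y_2 > ⋯`),
`Π_l` is upper triangular and homogeneous in weight: `Π_l = l + Σ_{v > l, (v)=(l)} c_v v`. -/
theorem PiL_triangular [Algebra ℚ R] (q : R) (l : Word) (hl : IsLyndon l) :
    (PiL q l) l = 1 ∧
      ∀ v : Word, (PiL q l) v ≠ 0 → v ≠ l → (wlt l v ∧ weight v = weight l) := by
  have := good_PiL q l.length l le_rfl hl
  exact ⟨this.1, fun v hv hne => this.2 v hv hne⟩
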